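/- arXiv:2301.07466 — 7 statements merged into one kernel-verified Lean document; each statement's English description precedes it below -/
import Mathlib

section
/- (Theorem A) Let g be a positive odd integer and k ≥ 1 a positive integer. Then the k-fold iterate of the Collatz map applied to g·2^k − 1 equals g·3^k − 1, i.e. f^[k](g·2^k − 1) = g·3^k − 1, and moreover g·3^k − 1 is even. -/
/-- The (shortcut) Collatz map. -/
def collatz (n : ℕ) : ℕ := if n % 2 = 0 then n / 2 else (3 * n + 1) / 2

/-- The reduced Collatz (Syracuse) map: remove all factors of 2 from 3n+1. -/
def syracuse (n : ℕ) : ℕ := (3 * n + 1) / 2 ^ (padicValNat 2 (3 * n + 1))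

lemma collatz_aux : ∀ k, 1 ≤ k → ∀ g : ℕ, 0 < g →
    collatz^[k] (g * 2 ^ k - 1) = g * 3 ^ k - 1 := by
  intro k hk
  induction k with
  | zero => omega
  | succ n ih =>
    intro g hg
    rw [Function.iterate_succ_apply]
    have h1 : 1 ≤ g * 2 ^ (n + 1) := Nat.one_le_iff_ne_zero.mpr (by positivity)
    have hmod : (g * 2 ^ (n + 1) - 1) % 2 = 1 := by
      have : g * 2 ^ (n + 1) % 2 = 0 := by
        simp [pow_succ, Nat.mul_mod]
      omega
    have hc : collatz (g * 2 ^ (n + 1) - 1) = 3 * g * 2 ^ n - 1 := by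
      simp only [collatz, hmod]
      norm_num
      have : 3 * (g * 2 ^ (n + 1) - 1) + 1 = (3 * g * 2 ^ n - 1) * 2 := by
        have h2 : 1 ≤ 3 * g * 2 ^ n := Nat.one_le_iff_ne_zero.mpr (by positivity)
        ring_nf
        ring_nf at h1
        omega
      rw [this]; omega
    rw [hc]
    rcases Nat.eq_zero_or_pos n with hn | hn
    · subst hn; simp; ring_nf
    · have := ih hn (3 * g) (by positivity)
      rw [this]
      ring_nf
theorem stmt3 (g k : ℕ) (hg : 0 < g) (hgodd : Odd g) (hk : 1 ≤ k) :
    collatz^[k] (g * 2 ^ k - 1) = g * 3 ^ k - 1 ∧ Even (g * 3 ^ k - 1) := by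
  refine ⟨collatz_aux k hk g hg, ?_⟩
  have hodd : Odd (g * 3 ^ k) := hgodd.mul (Odd.pow ⟨1, rfl⟩)
  obtain ⟨m, hm⟩ := hodd
  exact ⟨m, by omega⟩
end

section
/- (Theorem A, ascent/descent) Let g be a positive odd integer and k ≥ 1. Then the sequence f^[i](g·2^k − 1) is strictly increasing for i = 0, 1, ..., k, and the next term is strictly smaller: f^[k+1](g·2^k − 1) = (g·3^k − 1)/2 < f^[k](g·2^k − 1). Hence g·3^k − 1 is the highest number in the continually ascending forward Collatz sequence starting from g·2^k − 1. -/
theorem stmt4 (g k : ℕ) (hg : 0 < g) (hgodd : Odd g) (hk : 1 ≤ k) :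
    (∀ i < k, collatz^[i] (g * 2 ^ k - 1) < collatz^[i + 1] (g * 2 ^ k - 1)) ∧
    collatz^[k + 1] (g * 2 ^ k - 1) = (g * 3 ^ k - 1) / 2 ∧
    collatz^[k + 1] (g * 2 ^ k - 1) < collatz^[k] (g * 2 ^ k - 1) := by
  have key : ∀ i ≤ k, collatz^[i] (g * 2 ^ k - 1) = g * 3 ^ i * 2 ^ (k - i) - 1 := by
    intro i hi
    induction i with
    | zero => simp
    | succ i ih =>
      have hik : i < k := Nat.lt_of_succ_le hi
      rw [Function.iterate_succ_apply', ih (le_of_lt hik)]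
      have hki : k - i = (k - (i + 1)) + 1 := by omega
      have hA : 0 < g * 3 ^ i * 2 ^ (k - (i + 1)) := by positivity
      have e : g * 3 ^ i * 2 ^ (k - i) = 2 * (g * 3 ^ i * 2 ^ (k - (i + 1))) := by
        rw [hki, pow_succ]; ring
      have hodd : (g * 3 ^ i * 2 ^ (k - i) - 1) % 2 = 1 := by omega
      rw [collatz, if_neg (by omega)]
      have e2 : g * 3 ^ (i + 1) * 2 ^ (k - (i + 1)) = 3 * (g * 3 ^ i * 2 ^ (k - (i + 1))) := by
        ring
      omega
  have hfk : collatz^[k] (g * 2 ^ k - 1) = g * 3 ^ k - 1 := by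
    have := key k le_rfl; simpa using this
  have h3pos : 3 ≤ g * 3 ^ k := by
    calc (3:ℕ) = 1 * 3 ^ 1 := by norm_num
    _ ≤ g * 3 ^ k := Nat.mul_le_mul hg (Nat.pow_le_pow_right (by norm_num) hk)
  have heven : (g * 3 ^ k - 1) % 2 = 0 := by
    obtain ⟨m, hm⟩ := hgodd
    obtain ⟨p, hp⟩ : Odd (3 ^ k) := Odd.pow ⟨1, rfl⟩
    have : g * 3 ^ k = 2 * (2 * m * p + m + p) + 1 := by rw [hm, hp]; ring
    omega
  have hnext : collatz^[k + 1] (g * 2 ^ k - 1) = (g * 3 ^ k - 1) / 2 := by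
    rw [Function.iterate_succ_apply', hfk, collatz, if_pos heven]
  refine ⟨?_, hnext, ?_⟩
  · intro i hi
    rw [key i (le_of_lt hi), key (i + 1) hi]
    have hki : k - i = (k - (i + 1)) + 1 := by omega
    have hA : 0 < g * 3 ^ i * 2 ^ (k - (i + 1)) := by positivity
    have e : g * 3 ^ i * 2 ^ (k - i) = 2 * (g * 3 ^ i * 2 ^ (k - (i + 1))) := by
      rw [hki, pow_succ]; ring
    have e2 : g * 3 ^ (i + 1) * 2 ^ (k - (i + 1)) = 3 * (g * 3 ^ i * 2 ^ (k - (i + 1))) := by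
      ring
    omega
  · rw [hnext, hfk]
    omega
end

section
/- (Equation 1) Let n be a positive odd integer and let k = ν₂(n+1) be the 2-adic valuation of n+1 (so k ≥ 1). Then f^[k](n) = (n+1)·3^k/2^k − 1, where the division is exact, and this number is even. -/
lemma collatz_iter_aux (m : ℕ) (hm : Odd m) (k : ℕ) :
    ∀ j ≤ k, collatz^[j] (2 ^ k * m - 1) = 2 ^ (k - j) * 3 ^ j * m - 1 := by
  intro j hj
  induction j with
  | zero => simp
  | succ j ih =>
    have hj' : j ≤ k := Nat.le_of_succ_le hj
    rw [Function.iterate_succ_apply', ih hj']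
    have hkj : 1 ≤ k - j := by omega
    have hpos : 0 < 2 ^ (k - j) * 3 ^ j * m := by
      have : 0 < m := hm.pos
      positivity
    have hodd : (2 ^ (k - j) * 3 ^ j * m - 1) % 2 = 1 := by
      have h2 : 2 ∣ 2 ^ (k - j) := dvd_pow_self 2 (by omega)
      obtain ⟨c, hc⟩ := h2
      have : 2 ^ (k - j) * 3 ^ j * m = 2 * (c * (3 ^ j * m)) := by rw [hc]; ring
      omega
    rw [collatz, if_neg (by omega)]
    have hstep : 3 * (2 ^ (k - j) * 3 ^ j * m - 1) + 1
        = 2 * (2 ^ (k - (j + 1)) * 3 ^ (j + 1) * m - 1) := by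
      have h1 : 2 ^ (k - j) = 2 * 2 ^ (k - (j + 1)) := by
        rw [← pow_succ']
        congr 1
        omega
      have h2 : 0 < 2 ^ (k - (j+1)) * 3 ^ (j+1) * m := by
        have : 0 < m := hm.pos
        positivity
      have : 3 * (2 ^ (k - j) * 3 ^ j * m) = 2 * (2 ^ (k - (j+1)) * 3 ^ (j+1) * m) := by
        rw [h1]; ring
      omega
    omega

theorem stmt5 (n : ℕ) (hn : 0 < n) (hodd : Odd n)
    (k : ℕ) (hk : k = padicValNat 2 (n + 1)) :
    1 ≤ k ∧ 2 ^ k ∣ (n + 1) * 3 ^ k ∧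
    collatz^[k] n = (n + 1) * 3 ^ k / 2 ^ k - 1 ∧
    Even ((n + 1) * 3 ^ k / 2 ^ k - 1) := by
  have hne : n + 1 ≠ 0 := by omega
  have hdvd : 2 ^ k ∣ n + 1 := hk ▸ pow_padicValNat_dvd
  obtain ⟨m, hm⟩ := hdvd
  have hmodd : Odd m := by
    rcases Nat.even_or_odd m with he | ho
    · exfalso
      obtain ⟨c, hc⟩ := he
      have : 2 ^ (k + 1) ∣ n + 1 := ⟨c, by rw [hm, hc, pow_succ]; ring⟩
      exact (hk ▸ pow_succ_padicValNat_not_dvd hne) this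
    · exact ho
  have hk1 : 1 ≤ k := by
    rw [hk]
    apply one_le_padicValNat_of_dvd (by omega)
    exact hodd.add_one.two_dvd
  have hdiv : (n + 1) * 3 ^ k / 2 ^ k = 3 ^ k * m := by
    rw [hm, show 2 ^ k * m * 3 ^ k = 2 ^ k * (3 ^ k * m) by ring,
      Nat.mul_div_cancel_left _ (pow_pos two_pos k)]
  refine ⟨hk1, ⟨m * 3 ^ k, by rw [hm]; ring⟩, ?_, ?_⟩
  · have hn' : n = 2 ^ k * m - 1 := by omega
    rw [hn', collatz_iter_aux m hmodd k k le_rfl,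
      show 2 ^ k * m - 1 + 1 = n + 1 by omega, hdiv]
    simp
  · rw [hdiv]
    have h3 : Odd (3 ^ k * m) := (Odd.pow (⟨1, by norm_num⟩ : Odd 3)).mul hmodd
    obtain ⟨c, hc⟩ := h3
    exact ⟨c, by omega⟩
end

section
/- (Theorem S, Restriction 2) Suppose n > 0 does not reach 1 under the Collatz map f, while every positive integer m with m < n reaches 1. Then n is not congruent to 2 modulo 3, i.e. n % 3 ≠ 2. -/
theorem stmt9 (n : ℕ) (hn : 0 < n)
    (hdiv : ¬ ∃ j : ℕ, collatz^[j] n = 1)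
    (hmin : ∀ m : ℕ, 0 < m → m < n → ∃ j : ℕ, collatz^[j] m = 1) :
    n % 3 ≠ 2 := by
  intro h
  set m := (2 * n - 1) / 3 with hm
  have h3m : 3 * m = 2 * n - 1 := by omega
  have hmodd : m % 2 = 1 := by omega
  have hcm : collatz m = n := by
    unfold collatz
    rw [if_neg (by omega)]
    omega
  have hmpos : 0 < m := by omega
  have hmlt : m < n := by omega
  obtain ⟨j, hj⟩ := hmin m hmpos hmlt
  apply hdiv
  cases j with
  | zero =>
    simp at hj
    refine ⟨1, ?_⟩
    have : n = 2 := by omega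
    simp [this, collatz]
  | succ k =>
    refine ⟨k, ?_⟩
    rw [Function.iterate_succ_apply, hcm] at hj
    exact hj
end

section
/- (Theorem S, Restriction 3) Suppose n > 0 does not reach 1 under the Collatz map f, while every positive integer m with m < n reaches 1. Then n is not congruent to 1 modulo 4, i.e. n % 4 ≠ 1. -/
theorem stmt10 (n : ℕ) (hn : 0 < n)
    (hdiv : ¬ ∃ j : ℕ, collatz^[j] n = 1)
    (hmin : ∀ m : ℕ, 0 < m → m < n → ∃ j : ℕ, collatz^[j] m = 1) :
    n % 4 ≠ 1 := by
  intro h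
  obtain ⟨k, rfl⟩ : ∃ k, n = 4 * k + 1 := ⟨n / 4, by omega⟩
  rcases Nat.eq_zero_or_pos k with rfl | hk
  · exact hdiv ⟨0, rfl⟩
  have h1 : collatz (4 * k + 1) = 6 * k + 2 := by
    simp only [collatz]
    have : (4 * k + 1) % 2 = 1 := by omega
    rw [this]
    simp only [if_neg (by omega : ¬ (1 = 0))]
    omega
  have h2 : collatz (6 * k + 2) = 3 * k + 1 := by
    simp only [collatz]
    have : (6 * k + 2) % 2 = 0 := by omega
    rw [this, if_pos rfl]
    omega
  obtain ⟨j, hj⟩ := hmin (3 * k + 1) (by omega) (by omega)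
  apply hdiv
  refine ⟨j + 2, ?_⟩
  rw [Function.iterate_add_apply]
  simpa [Function.iterate_succ_apply, h1, h2] using hj
end

section
/- (Theorem S, Restriction 4) Suppose n > 0 does not reach 1 under the Collatz map f, while every positive integer m with m < n reaches 1. Then n is not congruent to 3 modulo 16, i.e. n % 16 ≠ 3. -/
theorem stmt11 (n : ℕ) (hn : 0 < n)
    (hdiv : ¬ ∃ j : ℕ, collatz^[j] n = 1)
    (hmin : ∀ m : ℕ, 0 < m → m < n → ∃ j : ℕ, collatz^[j] m = 1) :
    n % 16 ≠ 3 := by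
  intro h
  obtain ⟨k, hk⟩ : ∃ k, n = 16*k+3 := ⟨n/16, by omega⟩
  have e1 : collatz (16*k+3) = 24*k+5 := by unfold collatz; split <;> omega
  have e2 : collatz (24*k+5) = 36*k+8 := by unfold collatz; split <;> omega
  have e3 : collatz (36*k+8) = 18*k+4 := by unfold collatz; split <;> omega
  have e4 : collatz (18*k+4) = 9*k+2 := by unfold collatz; split <;> omega
  have h4 : collatz^[4] n = 9*k+2 := by
    subst hk
    simp only [Function.iterate_succ_apply, Function.iterate_zero_apply, e1, e2, e3, e4,
      show (4:ℕ) = 0+1+1+1+1 from rfl]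
  obtain ⟨j, hj⟩ := hmin (9*k+2) (by omega) (by omega)
  exact hdiv ⟨j+4, by rw [Function.iterate_add_apply, h4, hj]⟩
end

section
/- (Theorem S, combined) Suppose n > 0 does not reach 1 under the Collatz map f, while every positive integer m with m < n reaches 1. Then n is odd, n % 3 ≠ 2, n % 4 ≠ 1, and n % 16 ≠ 3; in particular n is not of any of the forms 2w, 1+4w, 2+3w, or 3+16w for a whole number w. -/
lemma reach_step (n : ℕ) (h : ∃ j, collatz^[j] (collatz n) = 1) :
    ∃ j, collatz^[j] n = 1 := by
  obtain ⟨j, hj⟩ := h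
  exact ⟨j + 1, by rwa [Function.iterate_add_apply, Function.iterate_one]⟩

theorem stmt12 (n : ℕ) (hn : 0 < n)
    (hdiv : ¬ ∃ j : ℕ, collatz^[j] n = 1)
    (hmin : ∀ m : ℕ, 0 < m → m < n → ∃ j : ℕ, collatz^[j] m = 1) :
    Odd n ∧ n % 3 ≠ 2 ∧ n % 4 ≠ 1 ∧ n % 16 ≠ 3 ∧
    (∀ w : ℕ, n ≠ 2 * w ∧ n ≠ 1 + 4 * w ∧ n ≠ 2 + 3 * w ∧ n ≠ 3 + 16 * w) := by
  have hne1 : n ≠ 1 := by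
    intro h; exact hdiv ⟨0, by simp [h]⟩
  have hodd : n % 2 = 1 := by
    by_contra h
    have he : n % 2 = 0 := by omega
    have hc : collatz n = n / 2 := by unfold collatz; simp [he]
    obtain ⟨j, hj⟩ := hmin (n / 2) (by omega) (by omega)
    exact hdiv (reach_step n ⟨j, by rwa [hc]⟩)
  have h3 : n % 3 ≠ 2 := by
    intro h
    set k := n / 3 with hk
    have hnk : n = 3 * k + 2 := by omega
    have hkodd : k % 2 = 1 := by omega
    have hm : collatz (2 * k + 1) = n := by
      unfold collatz; split <;> omega
    obtain ⟨j, hj⟩ := hmin (2 * k + 1) (by omega) (by omega)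
    cases j with
    | zero => simp at hj; omega
    | succ j' =>
      rw [Function.iterate_succ_apply, hm] at hj
      exact hdiv ⟨j', hj⟩
  have h4 : n % 4 ≠ 1 := by
    intro h
    set k := n / 4 with hk
    have hnk : n = 4 * k + 1 := by omega
    have hk0 : 0 < k := by omega
    have h1 : collatz n = 6 * k + 2 := by unfold collatz; split <;> omega
    have h2 : collatz (6 * k + 2) = 3 * k + 1 := by unfold collatz; split <;> omega
    obtain ⟨j, hj⟩ := hmin (3 * k + 1) (by omega) (by omega)
    exact hdiv (reach_step n (reach_step _ ⟨j, by rwa [h1, h2]⟩))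
  have h16 : n % 16 ≠ 3 := by
    intro h
    set k := n / 16 with hk
    have hnk : n = 16 * k + 3 := by omega
    have h1 : collatz n = 24 * k + 5 := by unfold collatz; split <;> omega
    have h2 : collatz (24 * k + 5) = 36 * k + 8 := by unfold collatz; split <;> omega
    have h3' : collatz (36 * k + 8) = 18 * k + 4 := by unfold collatz; split <;> omega
    have h4' : collatz (18 * k + 4) = 9 * k + 2 := by unfold collatz; split <;> omega
    obtain ⟨j, hj⟩ := hmin (9 * k + 2) (by omega) (by omega)
    exact hdiv (reach_step n (reach_step _ (reach_step _ (reach_step _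
      ⟨j, by rwa [h1, h2, h3', h4']⟩))))
  refine ⟨Nat.odd_iff.mpr hodd, h3, h4, h16, fun w => ⟨?_, ?_, ?_, ?_⟩⟩ <;> omega
end
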